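/- Let u ∈ (0,1) and ρ ∈ (−1,1). Then C(u,u;ρ) = 2u·g(u;ρ) − C(g(u;ρ), g(u;ρ); −ρ), i.e. Φ₂(Φ⁻¹(u),Φ⁻¹(u);ρ) = 2u·g(u;ρ) − Φ₂(Φ⁻¹(g(u;ρ)), Φ⁻¹(g(u;ρ)); −ρ) where g(u;ρ) = Φ(√((1−ρ)/(1+ρ))·Φ⁻¹(u)). -/

import Mathlib

open MeasureTheory Real Set

/-- Standard normal density φ. -/
noncomputable def stdPdf (x : ℝ) : ℝ :=
  (1 / Real.sqrt (2 * Real.pi)) * Real.exp (-x ^ 2 / 2)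

/-- Standard normal distribution function Φ. -/
noncomputable def stdCdf (h : ℝ) : ℝ := ∫ x in Set.Iio h, stdPdf x

/-- Inverse Φ⁻¹ of the standard normal distribution function (on (0,1)). -/
noncomputable def stdQuantile : ℝ → ℝ := Function.invFun stdCdf

/-- Bivariate standard normal density φ₂ with correlation ρ. -/
noncomputable def binPdf (x y ρ : ℝ) : ℝ :=
  (1 / (2 * Real.pi * Real.sqrt (1 - ρ ^ 2))) *
    Real.exp (-(x ^ 2 - 2 * ρ * x * y + y ^ 2) / (2 * (1 - ρ ^ 2)))

/-- Bivariate standard normal distribution function Φ₂. -/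
noncomputable def binCdf (h k ρ : ℝ) : ℝ :=
  ∫ x in Set.Iio h, ∫ y in Set.Iio k, binPdf x y ρ

/-- The bivariate normal copula C(u,v;ρ) = Φ₂(Φ⁻¹(u),Φ⁻¹(v);ρ). -/
noncomputable def normCopula (u v ρ : ℝ) : ℝ :=
  binCdf (stdQuantile u) (stdQuantile v) ρ

/-- g(u;ρ) = Φ(√((1−ρ)/(1+ρ))·Φ⁻¹(u)). -/
noncomputable def gFun (u ρ : ℝ) : ℝ :=
  stdCdf (Real.sqrt ((1 - ρ) / (1 + ρ)) * stdQuantile u)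

open MeasureTheory Real Set Filter

lemma stdPdf_pos (x : ℝ) : 0 < stdPdf x := by
  have : 0 < Real.sqrt (2 * Real.pi) := Real.sqrt_pos.2 (by positivity)
  unfold stdPdf; positivity

lemma stdPdf_continuous : Continuous stdPdf := by
  unfold stdPdf; fun_prop

lemma stdPdf_integrable : Integrable stdPdf := by
  have h : Integrable (fun x : ℝ => Real.exp (-(2⁻¹ : ℝ) * x ^ 2)) :=
    integrable_exp_neg_mul_sq (by norm_num)
  have h2 := h.const_mul (1 / Real.sqrt (2 * Real.pi))
  apply h2.congr
  filter_upwards with x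
  unfold stdPdf; ring_nf

lemma stdPdf_integral : ∫ x, stdPdf x = 1 := by
  have h : ∫ x : ℝ, Real.exp (-(2⁻¹:ℝ) * x ^ 2) = Real.sqrt (Real.pi / 2⁻¹) :=
    integral_gaussian 2⁻¹
  have e : (fun x : ℝ => stdPdf x) = fun x => (1 / Real.sqrt (2 * Real.pi)) * Real.exp (-(2⁻¹:ℝ) * x ^ 2) := by
    funext x; unfold stdPdf; ring_nf
  rw [e, integral_const_mul, h]
  rw [show Real.pi / 2⁻¹ = 2 * Real.pi by ring]
  have : Real.sqrt (2 * Real.pi) ≠ 0 := ne_of_gt (Real.sqrt_pos.2 (by positivity))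
  field_simp

/-- FTC for integrals over `Iio`. -/
lemma hasDerivAt_integral_Iio {f : ℝ → ℝ} (hint : Integrable f) (hcont : Continuous f) (a : ℝ) :
    HasDerivAt (fun h => ∫ x in Iio h, f x) (f a) a := by
  have key : ∀ h : ℝ, ∫ x in Iio h, f x = (∫ x in Iic (0:ℝ), f x) + ∫ x in (0:ℝ)..h, f x := by
    intro h
    rw [setIntegral_congr_set Iio_ae_eq_Iic,
      ← intervalIntegral.integral_Iic_sub_Iic hint.integrableOn hint.integrableOn]
    ring
  simp only [key]
  exact (intervalIntegral.integral_hasDerivAt_right hint.intervalIntegrable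
    (hcont.stronglyMeasurableAtFilter _ _) hcont.continuousAt).const_add _

lemma stdCdf_hasDerivAt (a : ℝ) : HasDerivAt stdCdf (stdPdf a) a :=
  hasDerivAt_integral_Iio stdPdf_integrable stdPdf_continuous a

lemma stdCdf_continuous : Continuous stdCdf :=
  continuous_iff_continuousAt.2 fun x => (stdCdf_hasDerivAt x).continuousAt

lemma stdCdf_strictMono : StrictMono stdCdf := by
  intro a b hab
  have h : stdCdf b - stdCdf a = ∫ x in a..b, stdPdf x := by
    unfold stdCdf
    rw [setIntegral_congr_set Iio_ae_eq_Iic, setIntegral_congr_set Iio_ae_eq_Iic,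
      intervalIntegral.integral_Iic_sub_Iic stdPdf_integrable.integrableOn
        stdPdf_integrable.integrableOn]
  have : 0 < ∫ x in a..b, stdPdf x :=
    intervalIntegral.intervalIntegral_pos_of_pos stdPdf_integrable.intervalIntegrable
      stdPdf_pos hab
  linarith

lemma stdCdf_nonneg (h : ℝ) : 0 ≤ stdCdf h :=
  setIntegral_nonneg measurableSet_Iio fun x _ => (stdPdf_pos x).le

lemma stdCdf_le_one (h : ℝ) : stdCdf h ≤ 1 := by
  rw [← stdPdf_integral]
  exact setIntegral_le_integral stdPdf_integrable
    (Eventually.of_forall fun x => (stdPdf_pos x).le)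

lemma stdPdf_even (x : ℝ) : stdPdf (-x) = stdPdf x := by unfold stdPdf; ring_nf

lemma stdCdf_reflect (t : ℝ) : stdCdf t + stdCdf (-t) = 1 := by
  have h1 : stdCdf (-t) = ∫ x in Ioi t, stdPdf x := by
    unfold stdCdf
    rw [setIntegral_congr_set Iio_ae_eq_Iic]
    have := integral_comp_neg_Iic (-t) stdPdf
    rw [neg_neg] at this
    rw [← this]
    exact setIntegral_congr_fun measurableSet_Iic fun x _ => (stdPdf_even x).symm
  have h2 : stdCdf t = ∫ x in Iic t, stdPdf x := setIntegral_congr_set Iio_ae_eq_Iic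
  rw [h1, h2, ← stdPdf_integral,
    ← setIntegral_union (Iic_disjoint_Ioi le_rfl) measurableSet_Ioi
      stdPdf_integrable.integrableOn stdPdf_integrable.integrableOn, Iic_union_Ioi,
    setIntegral_univ]

lemma stdCdf_zero : stdCdf 0 = 1/2 := by
  have := stdCdf_reflect 0
  rw [neg_zero] at this; linarith

lemma stdCdf_tendsto_atBot : Tendsto stdCdf atBot (nhds 0) := by
  have key : ∀ h : ℝ, stdCdf h = stdCdf 0 - ∫ x in h..(0:ℝ), stdPdf x := by
    intro h
    unfold stdCdf
    rw [setIntegral_congr_set Iio_ae_eq_Iic, setIntegral_congr_set Iio_ae_eq_Iic,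
      ← intervalIntegral.integral_Iic_sub_Iic stdPdf_integrable.integrableOn
        stdPdf_integrable.integrableOn]
    ring
  rw [show stdCdf = fun h => stdCdf 0 - ∫ x in h..(0:ℝ), stdPdf x from funext key]
  have h1 : Tendsto (fun h : ℝ => ∫ x in h..(0:ℝ), stdPdf x) atBot
      (nhds (∫ x in Iic (0:ℝ), stdPdf x)) :=
    intervalIntegral_tendsto_integral_Iic 0 stdPdf_integrable.integrableOn tendsto_id
  have h2 : stdCdf 0 = ∫ x in Iic (0:ℝ), stdPdf x := setIntegral_congr_set Iio_ae_eq_Iic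
  have := (tendsto_const_nhds (x := stdCdf 0) (f := atBot (α := ℝ))).sub h1
  rw [← h2] at this
  simpa using this

lemma stdCdf_tendsto_atTop : Tendsto stdCdf atTop (nhds 1) := by
  have key : ∀ h : ℝ, stdCdf h = stdCdf 0 + ∫ x in (0:ℝ)..h, stdPdf x := by
    intro h
    unfold stdCdf
    rw [setIntegral_congr_set Iio_ae_eq_Iic, setIntegral_congr_set Iio_ae_eq_Iic,
      ← intervalIntegral.integral_Iic_sub_Iic stdPdf_integrable.integrableOn
        stdPdf_integrable.integrableOn]
    ring
  rw [show stdCdf = fun h => stdCdf 0 + ∫ x in (0:ℝ)..h, stdPdf x from funext key]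
  have h1 : Tendsto (fun h : ℝ => ∫ x in (0:ℝ)..h, stdPdf x) atTop
      (nhds (∫ x in Ioi (0:ℝ), stdPdf x)) :=
    intervalIntegral_tendsto_integral_Ioi 0 stdPdf_integrable.integrableOn tendsto_id
  have h3 : stdCdf 0 + ∫ x in Ioi (0:ℝ), stdPdf x = 1 := by
    have h2 : stdCdf 0 = ∫ x in Iic (0:ℝ), stdPdf x := setIntegral_congr_set Iio_ae_eq_Iic
    rw [h2, ← stdPdf_integral,
      ← setIntegral_union (Iic_disjoint_Ioi le_rfl) measurableSet_Ioi
        stdPdf_integrable.integrableOn stdPdf_integrable.integrableOn, Iic_union_Ioi,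
      setIntegral_univ]
  have := (tendsto_const_nhds (x := stdCdf 0) (f := atTop (α := ℝ))).add h1
  rwa [h3] at this

lemma stdCdf_surjOn {u : ℝ} (hu : u ∈ Ioo (0:ℝ) 1) : ∃ x, stdCdf x = u := by
  obtain ⟨a, ha⟩ := (stdCdf_tendsto_atBot.eventually (eventually_lt_nhds hu.1)).exists
  obtain ⟨b, hb⟩ := (stdCdf_tendsto_atTop.eventually (eventually_gt_nhds hu.2)).exists
  have := intermediate_value_univ a b stdCdf_continuous
  exact this ⟨ha.le, hb.le⟩

lemma stdCdf_stdQuantile {u : ℝ} (hu : u ∈ Ioo (0:ℝ) 1) : stdCdf (stdQuantile u) = u :=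
  Function.invFun_eq (stdCdf_surjOn hu)

lemma stdQuantile_stdCdf (x : ℝ) : stdQuantile (stdCdf x) = x :=
  Function.leftInverse_invFun stdCdf_strictMono.injective x

/-- affine substitution in an integral over `Iio`. -/
lemma integral_comp_affine_Iio (f : ℝ → ℝ) {σ : ℝ} (hσ : 0 < σ) (m k : ℝ) :
    ∫ y in Iio k, f ((y - m) / σ) = σ * ∫ t in Iio ((k - m) / σ), f t := by
  have hσ' : σ ≠ 0 := hσ.ne'
  set e : ℝ → ℝ := fun x => m + σ * x with he
  have hemb : MeasurableEmbedding e :=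
    (((Homeomorph.mulLeft₀ σ hσ').trans (Homeomorph.addLeft m))).measurableEmbedding
  have hmap : Measure.map e volume = ENNReal.ofReal σ⁻¹ • volume := by
    have h1 : e = (fun x => m + x) ∘ (fun x => σ * x) := rfl
    rw [h1, ← Measure.map_map (measurable_const_add m) (measurable_const_mul σ),
      Real.map_volume_mul_left hσ', Measure.map_smul, (measurePreserving_add_left volume m).map_eq,
      abs_of_pos (inv_pos.2 hσ)]
  have hpre : e ⁻¹' (Iio k) = Iio ((k - m) / σ) := by
    ext x
    simp only [he, mem_preimage, mem_Iio]
    rw [lt_div_iff₀ hσ]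
    constructor <;> intro <;> nlinarith
  have key := hemb.setIntegral_map (μ := volume) (fun y => f ((y - m) / σ)) (Iio k)
  rw [hmap] at key
  rw [Measure.restrict_smul, integral_smul_measure] at key
  have hcomp : ∀ x : ℝ, f ((e x - m) / σ) = f x := by
    intro x; congr 1; rw [div_eq_iff hσ']; simp only [he]; ring
  rw [hpre] at key
  simp only [hcomp] at key
  rw [ENNReal.toReal_ofReal (inv_pos.2 hσ).le] at key
  have := key.symm
  field_simp at this ⊢
  rw [this, smul_eq_mul, ← mul_assoc, mul_one_div_cancel hσ', one_mul]

section Rho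
variable {ρ : ℝ} (hρ : ρ ∈ Ioo (-1:ℝ) 1)

lemma one_sub_sq_pos (hρ : ρ ∈ Ioo (-1:ℝ) 1) : 0 < 1 - ρ ^ 2 := by
  obtain ⟨h1, h2⟩ := hρ; nlinarith

lemma sigma_pos (hρ : ρ ∈ Ioo (-1:ℝ) 1) : 0 < Real.sqrt (1 - ρ ^ 2) :=
  Real.sqrt_pos.2 (one_sub_sq_pos hρ)

lemma binPdf_factor (hρ : ρ ∈ Ioo (-1:ℝ) 1) (x y : ℝ) :
    binPdf x y ρ = stdPdf x *
      ((Real.sqrt (1 - ρ ^ 2))⁻¹ * stdPdf ((y - ρ * x) / Real.sqrt (1 - ρ ^ 2))) := by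
  have hs := one_sub_sq_pos hρ
  have hσ := sigma_pos hρ
  have e1 : Real.exp (-x ^ 2 / 2) *
      Real.exp (-((y - ρ * x) / Real.sqrt (1 - ρ ^ 2)) ^ 2 / 2) =
      Real.exp (-(x ^ 2 - 2 * ρ * x * y + y ^ 2) / (2 * (1 - ρ ^ 2))) := by
    rw [← Real.exp_add]
    congr 1
    rw [div_pow, Real.sq_sqrt hs.le]
    field_simp
    ring
  have h2π : Real.sqrt (2 * Real.pi) * Real.sqrt (2 * Real.pi) = 2 * Real.pi :=
    Real.mul_self_sqrt (by positivity)
  have h2πne : Real.sqrt (2 * Real.pi) ≠ 0 := by positivity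
  unfold binPdf stdPdf
  rw [← e1]
  field_simp
  ring_nf
  exact Real.sq_sqrt (by positivity)

lemma binPdf_symm (x y ρ : ℝ) : binPdf x y ρ = binPdf y x ρ := by
  unfold binPdf; ring_nf

lemma binPdf_inner (hρ : ρ ∈ Ioo (-1:ℝ) 1) (x k : ℝ) :
    ∫ y in Iio k, binPdf x y ρ = stdPdf x * stdCdf ((k - ρ * x) / Real.sqrt (1 - ρ ^ 2)) := by
  have hσ := sigma_pos hρ
  simp only [binPdf_factor hρ]
  rw [integral_const_mul, integral_const_mul,
    integral_comp_affine_Iio stdPdf hσ (ρ * x) k]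
  rw [show stdCdf ((k - ρ * x) / Real.sqrt (1 - ρ ^ 2)) =
    ∫ t in Iio ((k - ρ * x) / Real.sqrt (1 - ρ ^ 2)), stdPdf t from rfl]
  field_simp

lemma binCdf_eq (hρ : ρ ∈ Ioo (-1:ℝ) 1) (h k : ℝ) :
    binCdf h k ρ =
      ∫ x in Iio h, stdPdf x * stdCdf ((k - ρ * x) / Real.sqrt (1 - ρ ^ 2)) := by
  unfold binCdf
  exact integral_congr_ae (Eventually.of_forall fun x => binPdf_inner hρ x k)

lemma G_cont (hρ : ρ ∈ Ioo (-1:ℝ) 1) :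
    Continuous (fun p : ℝ × ℝ => stdPdf p.1 * stdCdf ((p.2 - ρ * p.1) / Real.sqrt (1 - ρ ^ 2))) := by
  exact (stdPdf_continuous.comp continuous_fst).mul
    (stdCdf_continuous.comp (by fun_prop))

lemma G_integrable (hρ : ρ ∈ Ioo (-1:ℝ) 1) (b : ℝ) :
    Integrable (fun x => stdPdf x * stdCdf ((b - ρ * x) / Real.sqrt (1 - ρ ^ 2))) := by
  refine stdPdf_integrable.mono' ?_ ?_
  · exact ((stdPdf_continuous).mul (stdCdf_continuous.comp (by fun_prop))).aestronglyMeasurable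
  · filter_upwards with x
    have h1 := stdPdf_pos x
    have h2 := stdCdf_nonneg ((b - ρ * x) / Real.sqrt (1 - ρ ^ 2))
    have h3 := stdCdf_le_one ((b - ρ * x) / Real.sqrt (1 - ρ ^ 2))
    rw [Real.norm_eq_abs, abs_of_nonneg (by positivity)]
    nlinarith

lemma hasDerivAt_binCdf_fst (hρ : ρ ∈ Ioo (-1:ℝ) 1) (b a : ℝ) :
    HasDerivAt (fun h => binCdf h b ρ)
      (stdPdf a * stdCdf ((b - ρ * a) / Real.sqrt (1 - ρ ^ 2))) a := by
  have : (fun h => binCdf h b ρ) =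
      fun h => ∫ x in Iio h, stdPdf x * stdCdf ((b - ρ * x) / Real.sqrt (1 - ρ ^ 2)) :=
    funext fun h => binCdf_eq hρ h b
  rw [this]
  exact hasDerivAt_integral_Iio (G_integrable hρ b)
    ((stdPdf_continuous).mul (stdCdf_continuous.comp (by fun_prop))) a

lemma boundfun_integrable (hρ : ρ ∈ Ioo (-1:ℝ) 1) :
    Integrable (fun x : ℝ =>
      (1 / (2 * Real.pi * Real.sqrt (1 - ρ ^ 2))) * Real.exp (-x ^ 2 / 2)) := by
  have h : Integrable (fun x : ℝ => Real.exp (-(2⁻¹ : ℝ) * x ^ 2)) :=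
    integrable_exp_neg_mul_sq (by norm_num)
  have h2 := h.const_mul (1 / (2 * Real.pi * Real.sqrt (1 - ρ ^ 2)))
  apply h2.congr
  filter_upwards with x
  ring_nf

lemma binPdf_nonneg (hρ : ρ ∈ Ioo (-1:ℝ) 1) (x y : ℝ) : 0 ≤ binPdf x y ρ := by
  have hσ := sigma_pos hρ
  unfold binPdf; positivity

lemma binPdf_le_bound (hρ : ρ ∈ Ioo (-1:ℝ) 1) (x y : ℝ) :
    binPdf x y ρ ≤ (1 / (2 * Real.pi * Real.sqrt (1 - ρ ^ 2))) * Real.exp (-x ^ 2 / 2) := by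
  have hs := one_sub_sq_pos hρ
  have hσ := sigma_pos hρ
  unfold binPdf
  have hc : 0 < 1 / (2 * Real.pi * Real.sqrt (1 - ρ ^ 2)) := by positivity
  apply mul_le_mul_of_nonneg_left _ hc.le
  apply Real.exp_le_exp.2
  rw [div_le_div_iff₀ (by positivity) (by norm_num : (0:ℝ) < 2)]
  nlinarith [sq_nonneg (y - ρ * x)]

lemma binPdf_cont_fst (b₀ ρ : ℝ) : Continuous fun x => binPdf x b₀ ρ := by
  unfold binPdf; fun_prop

lemma hasDerivAt_binCdf_snd (hρ : ρ ∈ Ioo (-1:ℝ) 1) (a b₀ : ℝ) :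
    HasDerivAt (fun b => binCdf a b ρ)
      (stdPdf b₀ * stdCdf ((a - ρ * b₀) / Real.sqrt (1 - ρ ^ 2))) b₀ := by
  have hσ := sigma_pos hρ
  set σ := Real.sqrt (1 - ρ ^ 2) with hσdef
  have hbound : ∀ᵐ x ∂(volume.restrict (Iio a)), ∀ b ∈ Metric.ball b₀ 1,
      ‖binPdf x b ρ‖ ≤ (1 / (2 * Real.pi * σ)) * Real.exp (-x ^ 2 / 2) := by
    refine Eventually.of_forall fun x b _ => ?_
    rw [Real.norm_eq_abs, abs_of_nonneg (binPdf_nonneg hρ x b)]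
    exact binPdf_le_bound hρ x b
  have hdiff : ∀ᵐ x ∂(volume.restrict (Iio a)), ∀ b ∈ Metric.ball b₀ 1,
      HasDerivAt (fun b => stdPdf x * stdCdf ((b - ρ * x) / σ)) (binPdf x b ρ) b := by
    refine Eventually.of_forall fun x b _ => ?_
    have h1 : HasDerivAt (fun b : ℝ => (b - ρ * x) / σ) (1 / σ) b :=
      ((hasDerivAt_id b).sub_const (ρ * x)).div_const σ
    have h2 := (stdCdf_hasDerivAt ((b - ρ * x) / σ)).comp b h1
    have h3 := h2.const_mul (stdPdf x)
    convert h3 using 1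
    · rfl
    · rfl
    · rfl
    rw [binPdf_factor hρ]
    ring
  have main := hasDerivAt_integral_of_dominated_loc_of_deriv_le
    (μ := volume.restrict (Iio a)) (x₀ := b₀)
    (F := fun b x => stdPdf x * stdCdf ((b - ρ * x) / σ))
    (F' := fun b x => binPdf x b ρ)
    (bound := fun x => (1 / (2 * Real.pi * σ)) * Real.exp (-x ^ 2 / 2))
    (s := Metric.ball b₀ 1) (Metric.ball_mem_nhds b₀ one_pos)
    (Eventually.of_forall fun b =>
      (((stdPdf_continuous).mul (stdCdf_continuous.comp (by fun_prop))).aestronglyMeasurable).restrict)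
    (G_integrable hρ b₀).integrableOn
    ((binPdf_cont_fst b₀ ρ).aestronglyMeasurable.restrict)
    hbound (boundfun_integrable hρ).integrableOn hdiff
  have heq : (fun b => binCdf a b ρ) =
      fun b => ∫ x in Iio a, stdPdf x * stdCdf ((b - ρ * x) / σ) :=
    funext fun b => binCdf_eq hρ a b
  have hval : (∫ x in Iio a, binPdf x b₀ ρ) = stdPdf b₀ * stdCdf ((a - ρ * b₀) / σ) := by
    rw [integral_congr_ae (Eventually.of_forall fun x => binPdf_symm x b₀ ρ)]
    exact binPdf_inner hρ b₀ a
  rw [heq, ← hval]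
  exact main.2

lemma hasDerivAt_binCdf_diag (hρ : ρ ∈ Ioo (-1:ℝ) 1) (h : ℝ) :
    HasDerivAt (fun t => binCdf t t ρ)
      (2 * (stdPdf h * stdCdf ((h - ρ * h) / Real.sqrt (1 - ρ ^ 2)))) h := by
  set σ := Real.sqrt (1 - ρ ^ 2) with hσdef
  set G : ℝ → ℝ → ℝ := fun x b => stdPdf x * stdCdf ((b - ρ * x) / σ) with hG
  have hGc : Continuous fun p : ℝ × ℝ => G p.1 p.2 := G_cont hρ
  set u : ℝ → ℝ := fun y => ∫ x in h..y, G x y with hu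
  set ψ : ℝ → ℝ := fun y => binCdf h y ρ with hψ
  have hsplit : ∀ y, binCdf y y ρ = ψ y + u y := by
    intro y
    show binCdf y y ρ = binCdf h y ρ + ∫ x in h..y, G x y
    rw [binCdf_eq hρ y y, binCdf_eq hρ h y]
    rw [setIntegral_congr_set Iio_ae_eq_Iic, setIntegral_congr_set Iio_ae_eq_Iic]
    rw [← intervalIntegral.integral_Iic_sub_Iic (G_integrable hρ y).integrableOn
      (G_integrable hρ y).integrableOn]
    ring
  have hψ' : HasDerivAt ψ (G h h) h := hasDerivAt_binCdf_snd hρ h h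
  have hu' : HasDerivAt u (G h h) h := by
    rw [hasDerivAt_iff_isLittleO]
    rw [Asymptotics.isLittleO_iff]
    intro c hc
    obtain ⟨δ, hδ, hball⟩ := Metric.continuousAt_iff.1 (hGc.continuousAt (x := (h, h))) c hc
    have hmem : Metric.ball h δ ∈ nhds h := Metric.ball_mem_nhds h hδ
    filter_upwards [hmem] with y hy
    have hyd : |y - h| < δ := by rwa [Metric.mem_ball, Real.dist_eq] at hy
    have huh : u h = 0 := intervalIntegral.integral_same
    have hconst : ∫ x in h..y, G h h = (y - h) * G h h := by
      rw [intervalIntegral.integral_const, smul_eq_mul]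
    have hint1 : IntervalIntegrable (fun x => G x y) volume h y :=
      ((stdPdf_continuous).mul (stdCdf_continuous.comp (by fun_prop))).intervalIntegrable h y
    have hint2 : IntervalIntegrable (fun _ : ℝ => G h h) volume h y :=
      intervalIntegrable_const
    have hdiffint : u y - u h - (y - h) • G h h = ∫ x in h..y, (G x y - G h h) := by
      rw [intervalIntegral.integral_sub hint1 hint2, hconst, huh, smul_eq_mul]
      show (∫ x in h..y, G x y) - 0 - (y - h) * G h h =
        (∫ x in h..y, G x y) - (y - h) * G h h
      ring
    rw [hdiffint]
    have hbd : ∀ x ∈ Set.uIoc h y, ‖G x y - G h h‖ ≤ c := by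
      intro x hx
      have hx1 : |x - h| ≤ |y - h| := by
        rcases le_total h y with hle | hle
        · rw [Set.uIoc_of_le hle] at hx
          obtain ⟨h1, h2⟩ := hx
          rw [abs_of_nonneg (by linarith), abs_of_nonneg (by linarith)]
          linarith
        · rw [Set.uIoc_of_ge hle] at hx
          obtain ⟨h1, h2⟩ := hx
          rw [abs_of_nonpos (by linarith), abs_of_nonpos (by linarith)]
          linarith
      have hdist : dist (x, y) (h, h) < δ := by
        rw [Prod.dist_eq]
        apply max_lt (by rw [Real.dist_eq]; linarith) (by rw [Real.dist_eq]; linarith)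
      have := hball hdist
      rw [Real.dist_eq] at this
      exact le_of_lt this
    calc ‖∫ x in h..y, (G x y - G h h)‖ ≤ c * |y - h| :=
          intervalIntegral.norm_integral_le_of_norm_le_const hbd
      _ = c * ‖y - h‖ := by rw [Real.norm_eq_abs]
  have hsum := hψ'.add hu'
  have hfun : (fun y => ψ y + u y) = fun t => binCdf t t ρ := funext fun y => (hsplit y).symm
  rw [show ψ + u = fun t => binCdf t t ρ from hfun] at hsum
  convert hsum using 1
  · rfl
  · rfl
  simp [hG]
  ring

end Rho

section Main
variable {ρ : ℝ}

lemma alpha_pos (hρ : ρ ∈ Ioo (-1:ℝ) 1) : 0 < Real.sqrt ((1 - ρ) / (1 + ρ)) := by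
  obtain ⟨h1, h2⟩ := hρ
  apply Real.sqrt_pos.2
  apply div_pos <;> linarith

lemma alpha_rel1 (hρ : ρ ∈ Ioo (-1:ℝ) 1) (t : ℝ) :
    (t - ρ * t) / Real.sqrt (1 - ρ ^ 2) = Real.sqrt ((1 - ρ) / (1 + ρ)) * t := by
  obtain ⟨h1, h2⟩ := hρ
  have ha : Real.sqrt (1 - ρ) > 0 := Real.sqrt_pos.2 (by linarith)
  have hb : Real.sqrt (1 + ρ) > 0 := Real.sqrt_pos.2 (by linarith)
  have ha2 : Real.sqrt (1 - ρ) ^ 2 = 1 - ρ := Real.sq_sqrt (by linarith)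
  have hb2 : Real.sqrt (1 + ρ) ^ 2 = 1 + ρ := Real.sq_sqrt (by linarith)
  have hσ : Real.sqrt (1 - ρ ^ 2) = Real.sqrt (1 - ρ) * Real.sqrt (1 + ρ) := by
    rw [← Real.sqrt_mul (by linarith)]; congr 1; ring
  have hα : Real.sqrt ((1 - ρ) / (1 + ρ)) = Real.sqrt (1 - ρ) / Real.sqrt (1 + ρ) := by
    rw [Real.sqrt_div (by linarith)]
  rw [hσ, hα]
  field_simp
  linear_combination (-t) * ha2

lemma alpha_rel2 (hρ : ρ ∈ Ioo (-1:ℝ) 1) (t : ℝ) :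
    (Real.sqrt ((1 - ρ) / (1 + ρ)) * t - (-ρ) * (Real.sqrt ((1 - ρ) / (1 + ρ)) * t)) /
      Real.sqrt (1 - (-ρ) ^ 2) = t := by
  obtain ⟨h1, h2⟩ := hρ
  have ha : Real.sqrt (1 - ρ) > 0 := Real.sqrt_pos.2 (by linarith)
  have hb : Real.sqrt (1 + ρ) > 0 := Real.sqrt_pos.2 (by linarith)
  have ha2 : Real.sqrt (1 - ρ) ^ 2 = 1 - ρ := Real.sq_sqrt (by linarith)
  have hb2 : Real.sqrt (1 + ρ) ^ 2 = 1 + ρ := Real.sq_sqrt (by linarith)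
  have hneg : (1:ℝ) - (-ρ) ^ 2 = 1 - ρ ^ 2 := by ring
  have hσ : Real.sqrt (1 - ρ ^ 2) = Real.sqrt (1 - ρ) * Real.sqrt (1 + ρ) := by
    rw [← Real.sqrt_mul (by linarith)]; congr 1; ring
  have hα : Real.sqrt ((1 - ρ) / (1 + ρ)) = Real.sqrt (1 - ρ) / Real.sqrt (1 + ρ) := by
    rw [Real.sqrt_div (by linarith)]
  rw [hneg, hσ, hα]
  field_simp
  linear_combination (-t) * hb2
lemma neg_mem (hρ : ρ ∈ Ioo (-1:ℝ) 1) : -ρ ∈ Ioo (-1:ℝ) 1 := by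
  obtain ⟨h1, h2⟩ := hρ; constructor <;> linarith

lemma L_hasDerivAt (hρ : ρ ∈ Ioo (-1:ℝ) 1) (t : ℝ) :
    HasDerivAt (fun t => binCdf t t ρ +
      binCdf (Real.sqrt ((1 - ρ) / (1 + ρ)) * t) (Real.sqrt ((1 - ρ) / (1 + ρ)) * t) (-ρ) -
      2 * stdCdf t * stdCdf (Real.sqrt ((1 - ρ) / (1 + ρ)) * t)) 0 t := by
  set α := Real.sqrt ((1 - ρ) / (1 + ρ)) with hα
  have hρ' := neg_mem hρ
  have hmul : HasDerivAt (fun x : ℝ => α * x) α t := by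
    simpa using (hasDerivAt_id t).const_mul α
  have hd1 := hasDerivAt_binCdf_diag hρ t
  have hd2 := (hasDerivAt_binCdf_diag hρ' (α * t)).comp t hmul
  have h3a := stdCdf_hasDerivAt t
  have h3b := (stdCdf_hasDerivAt (α * t)).comp t hmul
  have h3 := ((h3a.mul h3b).const_mul 2)
  have htot := (hd1.add hd2).sub h3
  convert htot using 1
  · rfl
  · rfl
  · funext x
    simp only [Pi.add_apply, Pi.sub_apply, Pi.mul_apply, Function.comp_apply]
    ring
  · rw [alpha_rel1 hρ t, alpha_rel2 hρ t]
    simp only [Function.comp_apply]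
    ring

lemma L_zero (hρ : ρ ∈ Ioo (-1:ℝ) 1) :
    binCdf 0 0 ρ + binCdf 0 0 (-ρ) - 2 * stdCdf 0 * stdCdf 0 = 0 := by
  have hρ' := neg_mem hρ
  have hσ := sigma_pos hρ
  have hsum : binCdf 0 0 ρ + binCdf 0 0 (-ρ) = stdCdf 0 := by
    rw [binCdf_eq hρ 0 0, binCdf_eq hρ' 0 0,
      ← integral_add (G_integrable hρ 0).integrableOn (G_integrable hρ' 0).integrableOn]
    have : ∀ x : ℝ, stdPdf x * stdCdf ((0 - ρ * x) / Real.sqrt (1 - ρ ^ 2)) +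
        stdPdf x * stdCdf ((0 - (-ρ) * x) / Real.sqrt (1 - (-ρ) ^ 2)) = stdPdf x := by
      intro x
      have hneg : Real.sqrt (1 - (-ρ) ^ 2) = Real.sqrt (1 - ρ ^ 2) := by norm_num
      rw [hneg,
        show (0 - ρ * x) / Real.sqrt (1 - ρ ^ 2) = -(ρ * x / Real.sqrt (1 - ρ ^ 2)) by ring,
        show (0 - (-ρ) * x) / Real.sqrt (1 - ρ ^ 2) = ρ * x / Real.sqrt (1 - ρ ^ 2) by ring]
      linear_combination (stdPdf x) * stdCdf_reflect (ρ * x / Real.sqrt (1 - ρ ^ 2))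
    rw [integral_congr_ae (Eventually.of_forall this)]
    rfl
  rw [hsum, stdCdf_zero]
  norm_num

theorem copula_diagonal_reflection (u ρ : ℝ) (hu : u ∈ Set.Ioo (0 : ℝ) 1)
    (hρ : ρ ∈ Set.Ioo (-1 : ℝ) 1) :
    normCopula u u ρ =
      2 * u * gFun u ρ - normCopula (gFun u ρ) (gFun u ρ) (-ρ) := by
  set α := Real.sqrt ((1 - ρ) / (1 + ρ)) with hα
  set h := stdQuantile u with hh
  have hcdf : stdCdf h = u := stdCdf_stdQuantile hu
  have hg : gFun u ρ = stdCdf (α * h) := rfl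
  have hq : stdQuantile (gFun u ρ) = α * h := by rw [hg]; exact stdQuantile_stdCdf _
  set L : ℝ → ℝ := fun t => binCdf t t ρ + binCdf (α * t) (α * t) (-ρ) -
      2 * stdCdf t * stdCdf (α * t) with hL
  have hder : ∀ t, HasDerivAt L 0 t := fun t => L_hasDerivAt hρ t
  have hconst : L h = L 0 :=
    is_const_of_deriv_eq_zero (fun t => (hder t).differentiableAt)
      (fun t => (hder t).deriv) h 0
  have hL0 : L 0 = 0 := by
    simp only [hL, mul_zero]
    exact L_zero hρ
  have hLh : L h = 0 := hconst.trans hL0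
  simp only [hL] at hLh
  unfold normCopula
  rw [hq, hg, ← hh, ← hcdf]
  linarith

end Main
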